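/- Let V be a set, F : P(V) → P(V) an anti-monotone function, and κ an infinite cardinal. Then: (1) the union of two F_κ-closed subsets of V is F_κ-closed; (2) if θ is a limit ordinal with cf(θ) ≠ cf(κ) and ⟨D_α : α < θ⟩ is a ⊆-increasing sequence of F_κ-closed subsets of V, then ⋃_{α<θ} D_α is F_κ-closed. -/

import Mathlib

open Cardinal

/-- `F` is anti-monotone: `A ⊆ B` implies `F B ⊆ F A`. -/
def AntiMonotone {α : Type u} (F : Set α → Set α) : Prop :=
  ∀ A B : Set α, A ⊆ B → F B ⊆ F A

/-- `D` is `F_κ`-closed: `F Y ⊆ D` for every `Y ⊆ D` of cardinality `κ`. -/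
def FClosed {α : Type u} (F : Set α → Set α) (κ : Cardinal.{u}) (D : Set α) : Prop :=
  ∀ Y ⊆ D, #Y = κ → F Y ⊆ D

/-- Auxiliary: every ordinal has a monotone cofinal family indexed by `a.cof.ord.ToType`. -/
lemma exists_cof_family (a : Ordinal.{u}) :
    ∃ γ : a.cof.ord.ToType → Ordinal.{u},
      (∀ i, γ i < a) ∧ (∀ i j, i ≤ j → γ i ≤ γ j) ∧
      (∀ β, β < a → ∃ i, β ≤ γ i) ∧ (∀ x, (∀ i, γ i < x) → a ≤ x) := by
  obtain ⟨f, hf⟩ := Ordinal.exists_fundamental_sequence a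
  let e : a.cof.ord.ToType ≃o Set.Iio a.cof.ord := Ordinal.ToType.mk.symm
  refine ⟨fun i => f (e i) (e i).2, fun i => hf.lt (e i).2, ?_, ?_, ?_⟩
  · intro i j hij
    exact hf.monotone (e i).2 (e j).2 (Subtype.coe_le_coe.2 (e.le_iff_le.2 hij))
  · intro β hβ
    have hβ' : β < Ordinal.blsub a.cof.ord f := by rw [hf.blsub_eq]; exact hβ
    obtain ⟨p, hp, hle⟩ := Ordinal.lt_blsub_iff.1 hβ'
    refine ⟨e.symm ⟨p, hp⟩, ?_⟩
    have h2 : e (e.symm ⟨p, hp⟩) = ⟨p, hp⟩ := e.apply_symm_apply _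
    show β ≤ f (e (e.symm ⟨p, hp⟩)) (e (e.symm ⟨p, hp⟩)).2
    rw [h2]
    exact hle
  · intro x hx
    rw [← hf.blsub_eq]
    apply Ordinal.blsub_le
    intro p hp
    have h2 : e (e.symm ⟨p, hp⟩) = ⟨p, hp⟩ := e.apply_symm_apply _
    have h3 : f (e (e.symm ⟨p, hp⟩)) (e (e.symm ⟨p, hp⟩)).2 < x := hx (e.symm ⟨p, hp⟩)
    rwa [h2] at h3

theorem fclosed_union_and_chain {α : Type} (F : Set α → Set α) (hF : AntiMonotone F)
    (κ : Cardinal.{0}) (hκ : ℵ₀ ≤ κ) :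
    (∀ D₁ D₂ : Set α, FClosed F κ D₁ → FClosed F κ D₂ → FClosed F κ (D₁ ∪ D₂)) ∧
    (∀ θ : Ordinal.{0}, Order.IsSuccLimit θ → θ.cof ≠ κ.ord.cof →
      ∀ D : Ordinal.{0} → Set α, (∀ β γ : Ordinal, β ≤ γ → γ < θ → D β ⊆ D γ) →
        (∀ β < θ, FClosed F κ (D β)) → FClosed F κ (⋃ β ∈ Set.Iio θ, D β)) := by
  constructor
  · -- union of two
    intro D₁ D₂ h₁ h₂ Y hY hYcard
    by_cases hc1 : #(Y ∩ D₁ : Set α) = κ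
    · exact (hF _ _ Set.inter_subset_left).trans
        ((h₁ _ Set.inter_subset_right hc1).trans Set.subset_union_left)
    by_cases hc2 : #(Y ∩ D₂ : Set α) = κ
    · exact (hF _ _ Set.inter_subset_left).trans
        ((h₂ _ Set.inter_subset_right hc2).trans Set.subset_union_right)
    exfalso
    have hle1 : #(Y ∩ D₁ : Set α) < κ :=
      lt_of_le_of_ne (hYcard ▸ Cardinal.mk_le_mk_of_subset Set.inter_subset_left) hc1
    have hle2 : #(Y ∩ D₂ : Set α) < κ :=
      lt_of_le_of_ne (hYcard ▸ Cardinal.mk_le_mk_of_subset Set.inter_subset_left) hc2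
    have hYeq : Y = (Y ∩ D₁) ∪ (Y ∩ D₂) := by
      rw [← Set.inter_union_distrib_left]
      exact (Set.inter_eq_left.2 hY).symm
    have hle : #Y ≤ #(Y ∩ D₁ : Set α) + #(Y ∩ D₂ : Set α) := by
      calc #Y = #((Y ∩ D₁) ∪ (Y ∩ D₂) : Set α) := by rw [← hYeq]
      _ ≤ _ := Cardinal.mk_union_le _ _
    exact absurd (hYcard ▸ hle) (not_le.2 (Cardinal.add_lt_of_lt hκ hle1 hle2))
  · -- chain
    intro θ hθ hne D hmono hcl Y hY hYcard
    suffices h : ∃ β, β < θ ∧ F Y ⊆ D β by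
      obtain ⟨β, hβ, hsub⟩ := h
      exact hsub.trans (Set.subset_biUnion_of_mem (show β ∈ Set.Iio θ from hβ))
    have hsubcard : ∀ β, #(Y ∩ D β : Set α) ≤ κ := fun β =>
      hYcard ▸ Cardinal.mk_le_mk_of_subset Set.inter_subset_left
    by_cases hex : ∃ β, β < θ ∧ #(Y ∩ D β : Set α) = κ
    · obtain ⟨β, hβ, hcard⟩ := hex
      exact ⟨β, hβ, (hF _ _ Set.inter_subset_left).trans
        (hcl β hβ _ Set.inter_subset_right hcard)⟩
    push_neg at hex
    have hlt : ∀ β, β < θ → #(Y ∩ D β : Set α) < κ := fun β hβ =>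
      lt_of_le_of_ne (hsubcard β) (hex β hβ)
    exfalso
    have hY' : ∀ y : Y, ∃ β, β < θ ∧ (y : α) ∈ D β := by
      intro y
      have := hY y.2
      simpa using this
    choose b hbθ hbD using hY'
    rcases lt_trichotomy κ θ.cof with hA | hB | hC
    · -- κ < cof θ : Y is contained in a single D s
      have hsup : iSup b < θ := by
        apply Ordinal.iSup_lt_ord _ hbθ
        rwa [hYcard]
      have hYs : Y ⊆ D (iSup b) := by
        intro y hy
        exact hmono _ _ (Ordinal.le_iSup b ⟨y, hy⟩) hsup (hbD ⟨y, hy⟩)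
      have : #(Y ∩ D (iSup b) : Set α) = κ := by
        rw [Set.inter_eq_left.2 hYs, hYcard]
      exact absurd this (hex _ hsup)
    · -- κ = cof θ : cof θ is regular so κ.ord.cof = θ.cof
      subst hB
      exact hne (Cardinal.isRegular_cof hθ).cof_eq.symm
    · -- cof θ < κ
      obtain ⟨γ, hγθ', hγmono, hub, -⟩ := exists_cof_family θ
      have hγθ : ∀ i, γ i < θ := hγθ'
      set c : θ.cof.ord.ToType → Cardinal := fun i => #(Y ∩ D (γ i) : Set α) with hc
      have hmkι : #θ.cof.ord.ToType = θ.cof := by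
        rw [Cardinal.mk_toType, Cardinal.card_ord]
      have hcov : Y ⊆ ⋃ i, (Y ∩ D (γ i)) := by
        intro y hy
        obtain ⟨i, hi⟩ := hub (b ⟨y, hy⟩) (hbθ ⟨y, hy⟩)
        exact Set.mem_iUnion.2 ⟨i, hy, hmono _ _ hi (hγθ i) (hbD ⟨y, hy⟩)⟩
      have hsum : κ ≤ #θ.cof.ord.ToType * iSup c := by
        calc κ = #Y := hYcard.symm
        _ ≤ #(⋃ i, (Y ∩ D (γ i)) : Set α) := Cardinal.mk_le_mk_of_subset hcov
        _ ≤ Cardinal.sum c := Cardinal.mk_iUnion_le_sum_mk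
        _ ≤ _ := Cardinal.sum_le_mk_mul_iSup c
      have hci : ∀ i, c i < κ := fun i => hlt (γ i) (hγθ i)
      haveI : Nonempty θ.cof.ord.ToType :=
        Ordinal.nonempty_toType_iff.2 (Cardinal.isRegular_cof hθ).ord_pos.ne'
      have hιlt : #θ.cof.ord.ToType < κ := by rw [hmkι]; exact hC
      have hsupc : iSup c = κ := by
        refine le_antisymm (ciSup_le' fun i => (hci i).le) ?_
        by_contra hlt'
        push_neg at hlt'
        exact absurd hsum (not_le.2 (Cardinal.mul_lt_of_lt hκ hιlt hlt'))
      rcases lt_trichotomy θ.cof κ.ord.cof with hC1 | hC2 | hC3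
      · have hιlt1 : #θ.cof.ord.ToType < κ.ord.cof := by rw [hmkι]; exact hC1
        have : iSup c < κ := Ordinal.iSup_lt hιlt1 hci
        rw [hsupc] at this
        exact lt_irrefl κ this
      · exact hne hC2
      · -- cof κ.ord < cof θ
        obtain ⟨g, hgκ', -, -, hgbound⟩ := exists_cof_family κ.ord
        have hgκ : ∀ j, (g j).card < κ := fun j => Cardinal.lt_ord.1 (hgκ' j)
        have hchoose : ∀ j, ∃ i, (g j).card < c i := by
          intro j
          have := hgκ j
          rw [← hsupc] at this
          exact exists_lt_of_lt_ciSup this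
        choose t ht using hchoose
        have hcmono : ∀ i i', i ≤ i' → c i ≤ c i' := by
          intro i i' hii
          exact Cardinal.mk_le_mk_of_subset
            (Set.inter_subset_inter_right _ (hmono _ _ (hγmono _ _ hii) (hγθ i')))
        have hubt : Set.Unbounded (· < ·) (Set.range t) := by
          intro a
          by_contra hcon
          push_neg at hcon
          have hbdd : ∀ j, t j ≤ a := fun j => le_of_lt (hcon (t j) ⟨j, rfl⟩)
          have hga : ∀ j, g j < (c a).ord := by
            intro j
            rw [Cardinal.lt_ord]
            exact (ht j).trans_le (hcmono _ _ (hbdd j))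
          have h1 : κ.ord ≤ (c a).ord := hgbound _ hga
          have h2 : κ ≤ c a := by rwa [Cardinal.ord_le_ord] at h1
          exact absurd h2 (not_le.2 (hci a))
        have hcof : θ.cof.ord.cof ≤ #(Set.range t) := by
          haveI : IsWellOrder θ.cof.ord.ToType (· < ·) := isWellOrder_lt
          have := Order.cof_le (s := Set.range t) (fun a => let ⟨b, hb, h⟩ := hubt a; ⟨b, hb, not_lt.1 h⟩)
          rwa [Ordinal.cof_toType] at this
        have hcof2 : θ.cof.ord.cof ≤ κ.ord.cof := by
          refine hcof.trans (Cardinal.mk_range_le.trans ?_)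
          rw [Cardinal.mk_toType, Cardinal.card_ord]
        rw [(Cardinal.isRegular_cof hθ).cof_eq] at hcof2
        exact absurd hC3 (not_lt.2 hcof2)
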